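/- arXiv:2402.14777 — 3 statements merged into one kernel-verified Lean document; each statement's English description precedes it below -/
import Mathlib

section
/- Let (Ω, μ) be a probability space and q a natural number. Let ε, Ẽ : Ω → (Fin q → ℝ) be integrable random vectors, and let G be a measurable event with μ(G) > 0 such that Ẽ is mean-independent of G, i.e. ∫_G Ẽ dμ = μ(G) • ∫_Ω Ẽ dμ componentwise. Let B ∈ ℝ^{q×q} be a matrix such that I − B is invertible, let A ⊆ Fin q, and let M ∈ ℝ^{q×q} be the diagonal matrix with M_{kk} = 1 if k ∉ A and M_{kk} = 0 otherwise. Define the random vector Z = (I − B)⁻¹ ★ (Ẽ + M ★ ε) (matrix-vector multiplication applied pointwise). Then the conditional expectation of Z given G factors as E[Z ∣ G] = (I − B)⁻¹ ★ v + ((I − B)⁻¹ M) ★ w, where v = ∫_Ω Ẽ dμ depends only on Ẽ and w = (1/μ(G)) ∫_G ε dμ depends only on the event G. -/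
open MeasureTheory Matrix

lemma integral_mulVec {Ω : Type*} [MeasurableSpace Ω] (μ : Measure Ω)
    (q : ℕ) (A : Matrix (Fin q) (Fin q) ℝ) (f : Ω → (Fin q → ℝ))
    (hf : Integrable f μ) :
    ∫ ω, A *ᵥ f ω ∂μ = A *ᵥ ∫ ω, f ω ∂μ := by
  let L : (Fin q → ℝ) →L[ℝ] (Fin q → ℝ) := (Matrix.mulVecLin A).toContinuousLinearMap
  have := L.integral_comp_comm hf
  simpa [L, Matrix.mulVecLin] using this

/-- In a linear SCM, the counterfactual expectation after conditioning on a context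
event `G` and intervening (new weight matrix `B`, new noise `εt` on the intervened
coordinates `A`, old noise `ε` masked by `M` on the rest) decomposes as an
action-dependent term plus a linear map of the context-dependent noise mean. -/
theorem conditional_expectation_factors
    {Ω : Type*} [MeasurableSpace Ω] (μ : Measure Ω) [IsProbabilityMeasure μ]
    (q : ℕ) (ε εt : Ω → (Fin q → ℝ))
    (hε : Integrable ε μ) (hεt : Integrable εt μ)
    (G : Set Ω) (hG : MeasurableSet G) (hGpos : 0 < μ G)
    (hmi : ∫ ω in G, εt ω ∂μ = (μ G).toReal • ∫ ω, εt ω ∂μ)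
    (B : Matrix (Fin q) (Fin q) ℝ) (hB : IsUnit (1 - B))
    (A : Finset (Fin q))
    (M : Matrix (Fin q) (Fin q) ℝ)
    (hM : M = Matrix.diagonal (fun k => if k ∈ A then 0 else 1))
    (Z : Ω → (Fin q → ℝ))
    (hZ : ∀ ω, Z ω = (1 - B)⁻¹ *ᵥ (εt ω + M *ᵥ ε ω)) :
    (μ G).toReal⁻¹ • ∫ ω in G, Z ω ∂μ =
      (1 - B)⁻¹ *ᵥ (∫ ω, εt ω ∂μ)
        + ((1 - B)⁻¹ * M) *ᵥ ((μ G).toReal⁻¹ • ∫ ω in G, ε ω ∂μ) := by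
  have hc : (μ G).toReal ≠ 0 := by
    have : μ G ≠ 0 := hGpos.ne'
    simp [ENNReal.toReal_eq_zero_iff, this, measure_ne_top μ G]
  have hεG : Integrable ε (μ.restrict G) := hε.restrict
  have hεtG : Integrable εt (μ.restrict G) := hεt.restrict
  have hMε : Integrable (fun ω => M *ᵥ ε ω) (μ.restrict G) := by
    let L : (Fin q → ℝ) →L[ℝ] (Fin q → ℝ) := (Matrix.mulVecLin M).toContinuousLinearMap
    have := L.integrable_comp hεG
    simpa [L, Matrix.mulVecLin] using this
  have key : ∫ ω in G, Z ω ∂μ =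
      (1 - B)⁻¹ *ᵥ ((∫ ω in G, εt ω ∂μ) + M *ᵥ (∫ ω in G, ε ω ∂μ)) := by
    calc ∫ ω in G, Z ω ∂μ
        = ∫ ω in G, (1 - B)⁻¹ *ᵥ (εt ω + M *ᵥ ε ω) ∂μ := by
          simp only [hZ]
      _ = (1 - B)⁻¹ *ᵥ ∫ ω in G, (εt ω + M *ᵥ ε ω) ∂μ :=
          integral_mulVec _ q _ _ (hεtG.add hMε)
      _ = (1 - B)⁻¹ *ᵥ ((∫ ω in G, εt ω ∂μ) + ∫ ω in G, M *ᵥ ε ω ∂μ) := by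
          rw [integral_add hεtG hMε]
      _ = (1 - B)⁻¹ *ᵥ ((∫ ω in G, εt ω ∂μ) + M *ᵥ (∫ ω in G, ε ω ∂μ)) := by
          rw [integral_mulVec _ q M ε hεG]
  rw [key, hmi]
  rw [Matrix.mulVec_add, smul_add, Matrix.mulVec_smul, smul_smul,
    inv_mul_cancel₀ hc, one_smul, ← Matrix.mulVec_mulVec, ← Matrix.mulVec_smul]
  simp [Matrix.mulVec_smul]
end

section
/- Let m, n, r be natural numbers and suppose Y ∈ ℝ^{m×n} follows an exact latent factor model: Y_{uv} = ⟨p_u, q_v⟩ for some p_u, q_v ∈ ℝ^r, where ⟨·,·⟩ is the Euclidean inner product. Fix a target pair (i, j), a set of columns C ⊆ [n] and a set of rows R ⊆ [m]. Suppose β ∈ ℝ^C satisfies the training equations ∑_{j' ∈ C} β_{j'} Y_{i'j'} = Y_{i'j} for every i' ∈ R, and suppose the row factor p_i lies in the linear span of {p_{i'} : i' ∈ R}. Then the Synthetic Interventions prediction is exact: ∑_{j' ∈ C} β_{j'} Y_{ij'} = Y_{ij}. -/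
open Matrix Finset

/-- Exact recovery of Synthetic Interventions under the linear span inclusion
assumption: if `Y u v = ⟨p u, q v⟩`, the weights `β` fit the training rows `R` on
columns `C`, and `p i` lies in the span of `{p i' : i' ∈ R}`, then the SI prediction
for entry `(i, j)` is exact. -/
theorem synthetic_interventions_exact
    (m n r : ℕ) (Y : Matrix (Fin m) (Fin n) ℝ)
    (p : Fin m → (Fin r → ℝ)) (q : Fin n → (Fin r → ℝ))
    (hY : ∀ u v, Y u v = ∑ k, p u k * q v k)
    (i : Fin m) (j : Fin n) (C : Finset (Fin n)) (R : Finset (Fin m))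
    (β : Fin n → ℝ)
    (hβ : ∀ i' ∈ R, ∑ j' ∈ C, β j' * Y i' j' = Y i' j)
    (hspan : p i ∈ Submodule.span ℝ (p '' (R : Set (Fin m)))) :
    ∑ j' ∈ C, β j' * Y i j' = Y i j := by
  have key : ∀ x ∈ Submodule.span ℝ (p '' (R : Set (Fin m))),
      ∑ j' ∈ C, β j' * (∑ k, x k * q j' k) = ∑ k, x k * q j k := by
    intro x hx
    induction hx using Submodule.span_induction with
    | mem x hx =>
        obtain ⟨i', hi', rfl⟩ := hx
        have := hβ i' hi'
        simpa [hY] using this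
    | zero => simp
    | add x y hx hy ihx ihy =>
        simp only [Pi.add_apply, add_mul, Finset.sum_add_distrib, mul_add] at *
        rw [ihx, ihy]
    | smul c x hx ihx =>
        simp only [Pi.smul_apply, smul_eq_mul, mul_assoc, ← Finset.mul_sum] at *
        rw [← ihx]
        ring_nf
        simp [Finset.mul_sum, mul_assoc, mul_comm, mul_left_comm]
  have := key (p i) hspan
  simpa [hY] using this
end

section
/- The function (a, c) ↦ exp(5a²/4 + a·c/2) on ℝ × ℝ admits no finite-rank factorization: for every natural number r and every pair of functions p, q : ℝ → ℝ^r there exist real numbers a and c such that exp(5a²/4 + a·c/2) ≠ ∑_{k=1}^{r} p_k(a) q_k(c). -/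
open Matrix Submodule Module

/-- The function `(a, c) ↦ exp(5a²/4 + a c/2)` admits no finite-rank factorization:
for every `r` and every pair of functions `p q : ℝ → ℝ^r` there are `a c : ℝ` with
`exp(5a²/4 + a c/2) ≠ ∑ k, p a k * q c k`. -/
theorem exponential_example_no_finite_rank_factorization
    (r : ℕ) (p q : ℝ → Fin r → ℝ) :
    ∃ a c : ℝ, Real.exp (5 * a ^ 2 / 4 + a * c / 2) ≠ ∑ k, p a k * q c k := by
  by_contra h
  push_neg at h
  set n := r + 1 with hn
  set x : Fin n → ℝ := fun j => Real.exp ((j : ℝ) / 2) with hx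
  set d : Fin n → ℝ := fun i => Real.exp (5 * (i : ℝ) ^ 2 / 4) with hd
  set A : Matrix (Fin n) (Fin n) ℝ := Matrix.vandermonde x * Matrix.diagonal d with hA
  have hAapp : ∀ j i : Fin n, A j i = Real.exp (5 * (i : ℝ) ^ 2 / 4 + (i : ℝ) * (j : ℝ) / 2) := by
    intro j i
    rw [hA, Matrix.mul_diagonal, Matrix.vandermonde_apply, hx, hd]
    rw [← Real.exp_nat_mul, ← Real.exp_add]
    ring_nf
  have hxinj : Function.Injective x := by
    intro i j hij
    have := Real.exp_injective hij
    have : (i : ℝ) = (j : ℝ) := by linarith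
    exact Fin.ext (by exact_mod_cast this)
  have hdet : A.det ≠ 0 := by
    rw [hA, Matrix.det_mul, Matrix.det_diagonal]
    refine mul_ne_zero (Matrix.det_vandermonde_ne_zero_iff.2 hxinj) ?_
    exact Finset.prod_ne_zero_iff.2 fun i _ => Real.exp_ne_zero _
  have hLI : LinearIndependent ℝ (fun j => A j) :=
    Matrix.linearIndependent_rows_iff_isUnit.2 ((Matrix.isUnit_iff_isUnit_det A).2 hdet.isUnit)
  -- each row of A lies in the span of the r vectors w k
  set w : Fin r → (Fin n → ℝ) := fun k i => p (i : ℝ) k with hw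
  have hmem : ∀ j, A j ∈ Submodule.span ℝ (Set.range w) := by
    intro j
    have : A j = ∑ k, q (j : ℝ) k • w k := by
      funext i
      rw [hAapp j i, h (i : ℝ) (j : ℝ)]
      simp [hw, mul_comm]
    rw [this]
    exact Submodule.sum_mem _ fun k _ =>
      Submodule.smul_mem _ _ (Submodule.subset_span ⟨k, rfl⟩)
  have hle : Submodule.span ℝ (Set.range fun j => A j) ≤ Submodule.span ℝ (Set.range w) :=
    Submodule.span_le.2 (Set.range_subset_iff.2 hmem)
  have h1 : finrank ℝ (Submodule.span ℝ (Set.range fun j => A j)) = n := by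
    rw [finrank_span_eq_card hLI, Fintype.card_fin]
  have h2 : finrank ℝ (Submodule.span ℝ (Set.range w)) ≤ r := by
    exact (finrank_range_le_card (R := ℝ) w).trans_eq (Fintype.card_fin r)
  have := Submodule.finrank_mono hle
  omega
end
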